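/- Let H, N ≤ G with N normal in G, and set 𝒢 = G/N, ℋ = HN/N. If 𝒢/ℋ and HN/H are ℓ-divisible, then G/H is ℓ-divisible with δ_ℓ(G/H) ≤ δ_ℓ(𝒢/ℋ) + δ_ℓ(HN/H). -/
import Mathlib


def LDiv (ℓ : ℕ) {G : Type*} [Group G] (H : Subgroup G) (δ : ℕ) : Prop :=
  ∃ Gs : Fin δ → Subgroup G,
    (∀ i, H ≤ Gs i) ∧
    ∀ σ : G, σ ∉ H → orderOf σ = ℓ →
      ∃ i : Fin δ, ∃ τ : G, IsConj σ τ ∧ τ ∈ Gs i ∧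
        ∀ π ∈ Gs i, π * τ * π⁻¹ ∉ H

/-- Let `H, N ≤ G` with `N ⊴ G`. If `(G/N)/(HN/N)` is `ℓ`-divisible with `a`
subgroups and `HN/H` is `ℓ`-divisible with `b` subgroups, then `G/H` is
`ℓ`-divisible with `a + b` subgroups; in particular
`δ_ℓ(G/H) ≤ δ_ℓ(𝒢/ℋ) + δ_ℓ(HN/H)`. -/
theorem stmt12 {G : Type*} [Group G] (ℓ : ℕ) (hℓ : ℓ.Prime)
    (H N : Subgroup G) [N.Normal] (a b : ℕ)
    (hQ : LDiv ℓ (H.map (QuotientGroup.mk' N)) a)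
    (hHN : LDiv ℓ (H.subgroupOf (H ⊔ N)) b) :
    LDiv ℓ H (a + b) := by
  obtain ⟨Qs, hQle, hQcov⟩ := hQ
  obtain ⟨Ks, hKle, hKcov⟩ := hHN
  have hcm : (H.map (QuotientGroup.mk' N)).comap (QuotientGroup.mk' N) = H ⊔ N := by
    rw [Subgroup.comap_map_eq, QuotientGroup.ker_mk']
  refine ⟨Fin.addCases (fun i => (Qs i).comap (QuotientGroup.mk' N))
      (fun j => (Ks j).map (H ⊔ N).subtype), ?_, ?_⟩
  · refine Fin.addCases ?_ ?_
    · intro i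
      simp only [Fin.addCases_left]
      calc H ≤ (H.map (QuotientGroup.mk' N)).comap (QuotientGroup.mk' N) :=
            Subgroup.le_comap_map _ _
        _ ≤ _ := Subgroup.comap_mono (hQle i)
    · intro j
      simp only [Fin.addCases_right]
      have h1 : (H.subgroupOf (H ⊔ N)).map (H ⊔ N).subtype = H := by
        rw [Subgroup.subgroupOf_map_subtype, inf_eq_left]
        exact le_sup_left
      calc H = (H.subgroupOf (H ⊔ N)).map (H ⊔ N).subtype := h1.symm
        _ ≤ _ := Subgroup.map_mono (hKle j)
  · intro σ hσ hord
    by_cases hmem : σ ∈ H ⊔ N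
    · -- handle inside H ⊔ N
      set σ' : ↥(H ⊔ N) := ⟨σ, hmem⟩ with hσ'def
      have hσ'H : σ' ∉ H.subgroupOf (H ⊔ N) := by
        simpa [Subgroup.mem_subgroupOf] using hσ
      have hord' : orderOf σ' = ℓ := by
        have := orderOf_injective (H ⊔ N).subtype Subtype.coe_injective σ'
        simpa [hord] using this.symm.trans hord
      obtain ⟨j, τ', hconj, hτmem, hno⟩ := hKcov σ' hσ'H hord'
      refine ⟨Fin.natAdd a j, (τ' : G), ?_, ?_, ?_⟩
      · have := (H ⊔ N).subtype.map_isConj hconj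
        simpa using this
      · simp only [Fin.addCases_right]
        exact Subgroup.mem_map_of_mem _ hτmem
      · simp only [Fin.addCases_right]
        rintro π hπ hcon
        obtain ⟨π', hπ'mem, rfl⟩ := hπ
        have : π' * τ' * π'⁻¹ ∈ H.subgroupOf (H ⊔ N) := by
          rw [Subgroup.mem_subgroupOf]
          simpa using hcon
        exact hno π' hπ'mem this
    · -- quotient case
      set f := QuotientGroup.mk' N with hf
      have hnotin : f σ ∉ H.map f := by
        intro hc
        exact hmem (hcm ▸ (Subgroup.mem_comap.mpr hc))
      have hdvd : orderOf (f σ) ∣ ℓ := hord ▸ orderOf_map_dvd f σ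
      have hordq : orderOf (f σ) = ℓ := by
        rcases (Nat.Prime.eq_one_or_self_of_dvd hℓ _ hdvd) with h1 | h1
        · exfalso
          have : f σ = 1 := orderOf_eq_one_iff.mp h1
          have hσN : σ ∈ N := (QuotientGroup.eq_one_iff σ).mp this
          exact hmem (Subgroup.mem_sup_right hσN)
        · exact h1
      obtain ⟨i, tQ, hconj, hτmem, hno⟩ := hQcov (f σ) hnotin hordq
      obtain ⟨cQ, hcQ⟩ := hconj
      obtain ⟨c, hc⟩ := QuotientGroup.mk'_surjective N (cQ : G ⧸ N)
      have hτ : f (c * σ * c⁻¹) = tQ := by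
        have h1 : (cQ : G ⧸ N) * f σ * (cQ : G ⧸ N)⁻¹ = tQ := by
          rw [hcQ.eq]
          group
        rw [map_mul, map_mul, map_inv, hc, h1]
      refine ⟨Fin.castAdd b i, c * σ * c⁻¹, ?_, ?_, ?_⟩
      · exact isConj_iff.mpr ⟨c, rfl⟩
      · simp only [Fin.addCases_left]
        exact Subgroup.mem_comap.mpr (hτ ▸ hτmem)
      · simp only [Fin.addCases_left]
        rintro π hπ hcon
        have hπ' : f π ∈ Qs i := Subgroup.mem_comap.mp hπ
        refine hno (f π) hπ' ?_
        have : f (π * (c * σ * c⁻¹) * π⁻¹) ∈ H.map f :=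
          Subgroup.mem_map_of_mem f hcon
        simpa [map_mul, map_inv, hτ] using this
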